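/- Let k, p, k_1 be real numbers with k ≥ 3, p ≥ 3, and k_1 ≥ 10kp. Then H_1(2/3) > 0, where H_1 is the degree-8 polynomial from the Einstein system for SO(k_1 + (p-1)k). -/
import Mathlib


set_option maxHeartbeats 1000000
set_option maxRecDepth 10000

/-- Coefficient of `x^8` in the polynomial `H₁`. -/
noncomputable def H1c8 (k p k1 : ℝ) : ℝ :=
  k1^2*(p*k-2*k+k1)*(p^2*k^2-3*p*k^2+2*k^2-k1*k+k1*p*k+k1^2-k1)

/-- Coefficient of `x^7` in the polynomial `H₁`. -/
noncomputable def H1c7 (k p k1 : ℝ) : ℝ :=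
  -2*k1^2*(p*k-k+k1-2)*(2*p^2*k^2-6*p*k^2+4*k^2-2*k1*k+2*k1*p*k+k1^2-k1)

/-- Coefficient of `x^6` in the polynomial `H₁`. -/
noncomputable def H1c6 (k p k1 : ℝ) : ℝ :=
  k1*(2*p^4*k^4-10*p^3*k^4+18*p^2*k^4-14*p*k^4+4*k^4+10*k1*p^3*k^3-4*p^3*k^3-28*k1*p^2*k^3+14*p^2*k^3-2*k1*k^3+20*k1*p*k^3-14*p*k^3+4*k^3+5*k1^2*k^2+15*k1^2*p^2*k^2-35*k1*p^2*k^2+4*p^2*k^2-41*k1*k^2-23*k1^2*p*k^2+79*k1*p*k^2-12*p*k^2+8*k^2-2*k1^3*k+39*k1^2*k-33*k1*k+8*k1^3*p*k-40*k1^2*p*k+28*k1*p*k+k1^4-16*k1^3+19*k1^2-4*k1)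

/-- Coefficient of `x^5` in the polynomial `H₁`. -/
noncomputable def H1c5 (k p k1 : ℝ) : ℝ :=
  -2*k1*(p*k-k+k1-2)*(4*p^3*k^3-12*p^2*k^3+10*p*k^3-2*k^3+6*k1*p^2*k^2-8*p^2*k^2-2*k1*k^2-4*k1*p*k^2+18*p*k^2-10*k^2+k1^2*k+15*k1*k+3*k1^2*p*k-19*k1*p*k+4*p*k-4*k-8*k1^2+8*k1)

/-- Coefficient of `x^4` in the polynomial `H₁`. -/
noncomputable def H1c4 (k p k1 : ℝ) : ℝ :=
  (p^5*k^5-5*p^4*k^5+10*p^3*k^5-10*p^2*k^5+5*p*k^5-k^5+14*k1*p^4*k^4-4*p^4*k^4-38*k1*p^3*k^4+14*p^3*k^4+24*k1*p^2*k^4-18*p^2*k^4-10*k1*k^4+10*k1*p*k^4+10*p*k^4-2*k^4+25*k1^2*p^3*k^3-83*k1*p^3*k^3+8*p^3*k^3+8*k1^2*k^3-36*k1^2*p^2*k^3+204*k1*p^2*k^3-20*p^2*k^3+37*k1*k^3+3*k1^2*p*k^3-158*k1*p*k^3+17*p*k^3-5*k^3-3*k1^3*k^2-38*k1^2*k^2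+14*k1^3*p^2*k^2-122*k1^2*p^2*k^2+152*k1*p^2*k^2-8*p^2*k^2+101*k1*k^2-2*k1^3*p*k^2+150*k1^2*p*k^2-252*k1*p*k^2+12*p*k^2-4*k^2+12*k1^3*k-116*k1^2*k+100*k1*k+2*k1^4*p*k-60*k1^3*p*k+174*k1^2*p*k-112*k1*p*k+4*p*k-4*k-4*k1^4+60*k1^3-76*k1^2+20*k1)

/-- Coefficient of `x^3` in the polynomial `H₁`. -/
noncomputable def H1c3 (k p k1 : ℝ) : ℝ :=
  -2*(p*k-k+k1-2)*(2*p^4*k^4-6*p^3*k^4+6*p^2*k^4-2*p*k^4+6*k1*p^3*k^3-8*p^3*k^3-2*k1*p^2*k^3+18*p^2*k^3+4*k1*k^3-8*k1*p*k^3-14*p*k^3+4*k^3-2*k1^2*k^2+3*k1^2*p^2*k^2-35*k1*p^2*k^2+12*p^2*k^2-2*k1*k^2+2*k1^2*p*k^2+34*k1*p*k^2-16*p*k^2+4*k^2+2*k1^2*k-34*k1*k-16*k1^2*p*k+48*k1*p*k-8*p*k+8*k+16*k1^2-16*k1)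

/-- Coefficient of `x^2` in the polynomial `H₁`. -/
noncomputable def H1c2 (k p k1 : ℝ) : ℝ :=
  (6*p^5*k^5-16*p^4*k^5+8*p^3*k^5+12*p^2*k^5-14*p*k^5+4*k^5+13*k1*p^4*k^4-49*p^4*k^4-15*k1*p^3*k^4+127*p^3*k^4-7*k1*p^2*k^4-109*p^2*k^4+2*k1*k^4+7*k1*p*k^4+33*p*k^4-2*k^4+8*k1^2*p^3*k^3-96*k1*p^3*k^3+140*p^3*k^3-4*k1^2*k^3+2*k1^2*p^2*k^3+117*k1*p^2*k^3-283*p^2*k^3-26*k1*k^3-6*k1^2*p*k^3+5*k1*p*k^3+169*p*k^3-26*k^3+32*k1^2*k^2+k1^3*p^2*k^2-56*k1^2*p^2*k^2+243*k1*p^2*k^2-188*p^2*k^2+44*k1*k^2+8*k1^2*p*k^2-268*k1*p*k^2+276*p*k^2-92*k^2-56*k1^2*k+164*k1*k-4*k1^3*p*k+120*k1^2*p*k-240*k1*p*k+108*p*k-92*k+4*k1^3-64*k1^2+76*k1-16)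

/-- Coefficient of `x^1` in the polynomial `H₁`. -/
noncomputable def H1c1 (k p k1 : ℝ) : ℝ :=
  -2*(k*p-2)*(p*k-k+k1-2)*(2*p*k-2*k+k1-1)*(p^2*k^2+p*k^2-2*k^2-6*p*k+4*k+4)

/-- Coefficient of `x^0` in the polynomial `H₁`. -/
noncomputable def H1c0 (k p k1 : ℝ) : ℝ :=
  (p*k-k+k1-1)*(p^2*k^2+p*k^2-2*k^2-6*p*k+4*k+4)^2

/-- The degree-8 polynomial `H₁` in `x` from the Einstein system for `SO(k1 + (p-1)k)`,
with the explicit coefficient list given in the paper. -/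
noncomputable def H1 (k p k1 x : ℝ) : ℝ :=
  H1c8 k p k1 * x^8 + H1c7 k p k1 * x^7 + H1c6 k p k1 * x^6 + H1c5 k p k1 * x^5
    + H1c4 k p k1 * x^4 + H1c3 k p k1 * x^3 + H1c2 k p k1 * x^2 + H1c1 k p k1 * x
    + H1c0 k p k1


lemma H1aux (a b c : ℝ) (ha : 0 ≤ a) (hb : 0 ≤ b) (hc : 0 ≤ c) :
    (0:ℝ) < (17782338564 * a^0 * b^0 * c^1 + 422648136 * a^0 * b^0 * c^2 + 4925700 * a^0 * b^0 * c^3 + 28256 * a^0 * b^0 * c^4 + 64 * a^0 * b^0 * c^5 + 543815227764 * a^0 * b^1 * c^0 + 26268727464 * a^0 * b^1 * c^1 + 465149628 * a^0 * b^1 * c^2 + 3595656 * a^0 * b^1 * c^3 + 10272 * a^0 * b^1 * c^4 + 404538563655 * a^0 * b^2 * c^0 + 14535152973 * a^0 * b^2 * c^1 + 170527896 * a^0 * b^2 * c^2 + 655956 * a^0 * b^2 * c^3 + 150194316987 * a^0 * b^3 * c^0 + 3570582762 * a^0 * b^3 * c^1 + 20825316 * a^0 * b^3 * c^2 + 27834664473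 * a^0 * b^4 * c^0 + 328573665 * a^0 * b^4 * c^1 + 2060137233 * a^0 * b^5 * c^0 + 439706500272 * a^1 * b^0 * c^0 + 21806079336 * a^1 * b^0 * c^1 + 393679584 * a^1 * b^0 * c^2 + 3088712 * a^1 * b^0 * c^3 + 8928 * a^1 * b^0 * c^4 + 840207388320 * a^1 * b^1 * c^0 + 33001360668 * a^1 * b^1 * c^1 + 444605220 * a^1 * b^1 * c^2 + 2327872 * a^1 * b^1 * c^3 + 3424 * a^1 * b^1 * c^4 + 639093441636 * a^1 * b^2 * c^0 + 18663109560 * a^1 * b^2 * c^1 + 166885128 * a^1 * b^2 * c^2 + 437304 * a^1 * b^2 * c^3 + 242027588979 * a^1 * b^3 * c^0 + 4676063040 * a^1 * b^3 * c^1 + 20825316 * a^1 * b^3 * c^2 + 45656436294 * a^1 * b^4 * c^0 + 438098220 * a^1 * b^4 * c^1 + 3433562055 * a^1 * b^5 * c^0 + 261601463052 * a^2 * b^0 * c^0 + 9937811016 * a^2 * b^0 * c^1 + 121422408 * a^2 * b^0 * c^2 + 481732 * a^2 * b^0 * c^3 + 515627980956 * a^2 * b^1 * c^0 + 15479652636 *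 a^2 * b^1 * c^1 + 141302436 * a^2 * b^1 * c^2 + 376440 * a^2 * b^1 * c^3 + 402496759170 * a^2 * b^2 * c^0 + 8971418610 * a^2 * b^2 * c^1 + 54414120 * a^2 * b^2 * c^2 + 72884 * a^2 * b^2 * c^3 + 155804805126 * a^2 * b^3 * c^0 + 2295674532 * a^2 * b^3 * c^1 + 6941772 * a^2 * b^3 * c^2 + 29947843422 * a^2 * b^4 * c^0 + 219049110 * a^2 * b^4 * c^1 + 2289041370 * a^2 * b^5 * c^0 + 76557997800 * a^3 * b^0 * c^0 + 1990966824 * a^3 * b^0 * c^1 + 12385712 * a^3 * b^0 * c^2 + 156904304004 * a^3 * b^1 * c^0 + 3210990756 * a^3 * b^1 * c^1 + 14927996 * a^3 * b^1 * c^2 + 126263852928 * a^3 * b^2 * c^0 + 1913265216 * a^3 * b^2 * c^1 + 5911096 * a^3 * b^2 * c^2 + 50080603950 * a^3 * b^3 * c^0 + 500737232 * a^3 * b^3 * c^1 + 771308 * a^3 * b^3 * c^2 + 9819354216 * a^3 * b^4 * c^0 + 48677580 * a^3 * b^4 * c^1 + 763013790 * a^3 * b^5 * c^0 + 10964539404 *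 a^4 * b^0 * c^0 + 147552132 * a^4 * b^0 * c^1 + 23633211600 * a^4 * b^1 * c^0 + 248336188 * a^4 * b^1 * c^1 + 19719309159 * a^4 * b^2 * c^0 + 152710729 * a^4 * b^2 * c^1 + 8036819231 * a^4 * b^3 * c^0 + 40943714 * a^4 * b^3 * c^1 + 1609348993 * a^4 * b^4 * c^0 + 4056465 * a^4 * b^4 * c^1 + 127168965 * a^4 * b^5 * c^0 + 609894432 * a^5 * b^0 * c^0 + 1406250300 * a^5 * b^1 * c^0 + 1225798700 * a^5 * b^2 * c^0 + 515065215 * a^5 * b^3 * c^0 + 105475930 * a^5 * b^4 * c^0 + 8477931 * a^5 * b^5 * c^0) + 291848917536 := by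
  apply add_pos_of_nonneg_of_pos
  · repeat' apply add_nonneg
    all_goals exact mul_nonneg (mul_nonneg (mul_nonneg (by norm_num) (pow_nonneg ha _)) (pow_nonneg hb _)) (pow_nonneg hc _)
  · norm_num


set_option maxHeartbeats 8000000 in
/-- For `k ≥ 3`, `p ≥ 3`, `k₁ ≥ 10kp`, we have `H₁(2/3) > 0`. -/
theorem stmt_14 (k p k1 : ℝ) (hk : 3 ≤ k) (hp : 3 ≤ p) (hk1 : 10 * k * p ≤ k1) :
    0 < H1 k p k1 (2 / 3) := by
  have ha : (0:ℝ) ≤ k - 3 := by linarith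
  have hb : (0:ℝ) ≤ p - 3 := by linarith
  have hc : (0:ℝ) ≤ k1 - 10*k*p := by linarith
  have key : 6561 * H1 k p k1 (2/3) =
      (17782338564 * (k-3)^0 * (p-3)^0 * (k1-10*k*p)^1 + 422648136 * (k-3)^0 * (p-3)^0 * (k1-10*k*p)^2 + 4925700 * (k-3)^0 * (p-3)^0 * (k1-10*k*p)^3 + 28256 * (k-3)^0 * (p-3)^0 * (k1-10*k*p)^4 + 64 * (k-3)^0 * (p-3)^0 * (k1-10*k*p)^5 + 543815227764 * (k-3)^0 * (p-3)^1 * (k1-10*k*p)^0 + 26268727464 * (k-3)^0 * (p-3)^1 * (k1-10*k*p)^1 + 465149628 * (k-3)^0 * (p-3)^1 * (k1-10*k*p)^2 + 3595656 * (k-3)^0 * (p-3)^1 * (k1-10*k*p)^3 + 10272 * (k-3)^0 * (p-3)^1 * (k1-10*k*p)^4 + 404538563655 * (k-3)^0 * (p-3)^2 * (k1-10*k*p)^0 + 14535152973 * (k-3)^0 * (p-3)^2 * (k1-10*k*p)^1 + 170527896 * (k-3)^0 * (p-3)^2 * (k1-10*k*p)^2 + 655956 * (k-3)^0 * (p-3)^2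 * (k1-10*k*p)^3 + 150194316987 * (k-3)^0 * (p-3)^3 * (k1-10*k*p)^0 + 3570582762 * (k-3)^0 * (p-3)^3 * (k1-10*k*p)^1 + 20825316 * (k-3)^0 * (p-3)^3 * (k1-10*k*p)^2 + 27834664473 * (k-3)^0 * (p-3)^4 * (k1-10*k*p)^0 + 328573665 * (k-3)^0 * (p-3)^4 * (k1-10*k*p)^1 + 2060137233 * (k-3)^0 * (p-3)^5 * (k1-10*k*p)^0 + 439706500272 * (k-3)^1 * (p-3)^0 * (k1-10*k*p)^0 + 21806079336 * (k-3)^1 * (p-3)^0 * (k1-10*k*p)^1 + 393679584 * (k-3)^1 * (p-3)^0 * (k1-10*k*p)^2 + 3088712 * (k-3)^1 * (p-3)^0 * (k1-10*k*p)^3 + 8928 * (k-3)^1 * (p-3)^0 * (k1-10*k*p)^4 + 840207388320 * (k-3)^1 * (p-3)^1 * (k1-10*k*p)^0 + 33001360668 * (k-3)^1 * (p-3)^1 * (k1-10*k*p)^1 + 444605220 * (k-3)^1 * (p-3)^1 * (k1-10*k*p)^2 + 2327872 * (k-3)^1 * (p-3)^1 * (k1-10*k*p)^3 + 3424 * (k-3)^1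 * (p-3)^1 * (k1-10*k*p)^4 + 639093441636 * (k-3)^1 * (p-3)^2 * (k1-10*k*p)^0 + 18663109560 * (k-3)^1 * (p-3)^2 * (k1-10*k*p)^1 + 166885128 * (k-3)^1 * (p-3)^2 * (k1-10*k*p)^2 + 437304 * (k-3)^1 * (p-3)^2 * (k1-10*k*p)^3 + 242027588979 * (k-3)^1 * (p-3)^3 * (k1-10*k*p)^0 + 4676063040 * (k-3)^1 * (p-3)^3 * (k1-10*k*p)^1 + 20825316 * (k-3)^1 * (p-3)^3 * (k1-10*k*p)^2 + 45656436294 * (k-3)^1 * (p-3)^4 * (k1-10*k*p)^0 + 438098220 * (k-3)^1 * (p-3)^4 * (k1-10*k*p)^1 + 3433562055 * (k-3)^1 * (p-3)^5 * (k1-10*k*p)^0 + 261601463052 * (k-3)^2 * (p-3)^0 * (k1-10*k*p)^0 + 9937811016 * (k-3)^2 * (p-3)^0 * (k1-10*k*p)^1 + 121422408 * (k-3)^2 * (p-3)^0 * (k1-10*k*p)^2 + 481732 * (k-3)^2 * (p-3)^0 * (k1-10*k*p)^3 + 515627980956 * (k-3)^2 * (p-3)^1 * (k1-10*k*p)^0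 + 15479652636 * (k-3)^2 * (p-3)^1 * (k1-10*k*p)^1 + 141302436 * (k-3)^2 * (p-3)^1 * (k1-10*k*p)^2 + 376440 * (k-3)^2 * (p-3)^1 * (k1-10*k*p)^3 + 402496759170 * (k-3)^2 * (p-3)^2 * (k1-10*k*p)^0 + 8971418610 * (k-3)^2 * (p-3)^2 * (k1-10*k*p)^1 + 54414120 * (k-3)^2 * (p-3)^2 * (k1-10*k*p)^2 + 72884 * (k-3)^2 * (p-3)^2 * (k1-10*k*p)^3 + 155804805126 * (k-3)^2 * (p-3)^3 * (k1-10*k*p)^0 + 2295674532 * (k-3)^2 * (p-3)^3 * (k1-10*k*p)^1 + 6941772 * (k-3)^2 * (p-3)^3 * (k1-10*k*p)^2 + 29947843422 * (k-3)^2 * (p-3)^4 * (k1-10*k*p)^0 + 219049110 * (k-3)^2 * (p-3)^4 * (k1-10*k*p)^1 + 2289041370 * (k-3)^2 * (p-3)^5 * (k1-10*k*p)^0 + 76557997800 * (k-3)^3 * (p-3)^0 * (k1-10*k*p)^0 + 1990966824 * (k-3)^3 * (p-3)^0 * (k1-10*k*p)^1 + 12385712 * (k-3)^3 * (p-3)^0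 * (k1-10*k*p)^2 + 156904304004 * (k-3)^3 * (p-3)^1 * (k1-10*k*p)^0 + 3210990756 * (k-3)^3 * (p-3)^1 * (k1-10*k*p)^1 + 14927996 * (k-3)^3 * (p-3)^1 * (k1-10*k*p)^2 + 126263852928 * (k-3)^3 * (p-3)^2 * (k1-10*k*p)^0 + 1913265216 * (k-3)^3 * (p-3)^2 * (k1-10*k*p)^1 + 5911096 * (k-3)^3 * (p-3)^2 * (k1-10*k*p)^2 + 50080603950 * (k-3)^3 * (p-3)^3 * (k1-10*k*p)^0 + 500737232 * (k-3)^3 * (p-3)^3 * (k1-10*k*p)^1 + 771308 * (k-3)^3 * (p-3)^3 * (k1-10*k*p)^2 + 9819354216 * (k-3)^3 * (p-3)^4 * (k1-10*k*p)^0 + 48677580 * (k-3)^3 * (p-3)^4 * (k1-10*k*p)^1 + 763013790 * (k-3)^3 * (p-3)^5 * (k1-10*k*p)^0 + 10964539404 * (k-3)^4 * (p-3)^0 * (k1-10*k*p)^0 + 147552132 * (k-3)^4 * (p-3)^0 * (k1-10*k*p)^1 + 23633211600 * (k-3)^4 * (p-3)^1 * (k1-10*k*p)^0 + 248336188 * (k-3)^4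 * (p-3)^1 * (k1-10*k*p)^1 + 19719309159 * (k-3)^4 * (p-3)^2 * (k1-10*k*p)^0 + 152710729 * (k-3)^4 * (p-3)^2 * (k1-10*k*p)^1 + 8036819231 * (k-3)^4 * (p-3)^3 * (k1-10*k*p)^0 + 40943714 * (k-3)^4 * (p-3)^3 * (k1-10*k*p)^1 + 1609348993 * (k-3)^4 * (p-3)^4 * (k1-10*k*p)^0 + 4056465 * (k-3)^4 * (p-3)^4 * (k1-10*k*p)^1 + 127168965 * (k-3)^4 * (p-3)^5 * (k1-10*k*p)^0 + 609894432 * (k-3)^5 * (p-3)^0 * (k1-10*k*p)^0 + 1406250300 * (k-3)^5 * (p-3)^1 * (k1-10*k*p)^0 + 1225798700 * (k-3)^5 * (p-3)^2 * (k1-10*k*p)^0 + 515065215 * (k-3)^5 * (p-3)^3 * (k1-10*k*p)^0 + 105475930 * (k-3)^5 * (p-3)^4 * (k1-10*k*p)^0 + 8477931 * (k-3)^5 * (p-3)^5 * (k1-10*k*p)^0) + 291848917536 := by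
    unfold H1 H1c8 H1c7 H1c6 H1c5 H1c4 H1c3 H1c2 H1c1 H1c0
    ring
  have := H1aux (k-3) (p-3) (k1-10*k*p) ha hb hc
  linarith
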